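/- If g : ℕ → ℕ is a total computable function such that W_{g(e)} ≠ W_e for all e (g is fixed-point free), then there exists a total computable (relative to g) function d : ℕ → ℕ that is diagonally non-computable: d(e) ≠ Φ_e(e) whenever Φ_e(e)↓. -/

import Mathlib

/-- The `e`-th partial computable function `Φ_e`. -/
def Phi (e : ℕ) : ℕ →. ℕ := (Denumerable.ofNat Nat.Partrec.Code e).eval

/-- `W_e`, the domain of the `e`-th partial computable function. -/
def WSet (e : ℕ) : Set ℕ := {x | (Phi e x).Dom}

open Nat.Partrec (Code)
open Nat.Partrec.Code

theorem phi_partrec : Partrec₂ Phi :=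
  eval_part.comp ((Computable.ofNat Code).comp Computable.fst) Computable.snd

/-- A total computable fixed-point-free function computes a diagonally
non-computable function (Arslanov / Soare V.5.8 direction). -/
theorem stmt19 (g : ℕ → ℕ) (hg : Computable g)
    (hfpf : ∀ e, WSet (g e) ≠ WSet e) :
    ∃ d : ℕ → ℕ, Computable d ∧
      ∀ e (h : (Phi e e).Dom), d e ≠ (Phi e e).get h := by
  -- the function f (pair e x) = Φ_{Φ_e(e)}(x)
  have hu : Computable (fun n : ℕ => n.unpair.1) :=
    (Primrec.fst.comp Primrec.unpair).to_comp
  have hu2 : Computable (fun n : ℕ => n.unpair.2) :=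
    (Primrec.snd.comp Primrec.unpair).to_comp
  have hf : Partrec (fun n : ℕ => (Phi n.unpair.1 n.unpair.1).bind
      fun v => Phi v n.unpair.2) :=
    (phi_partrec.comp hu hu).bind
      (phi_partrec.comp Computable.snd (hu2.comp Computable.fst)).to₂
  obtain ⟨c, hc⟩ := exists_code.1 (Partrec.nat_iff.1 hf)
  set h : ℕ → ℕ := fun e => Encodable.encode (c.curry e) with hh
  have hkey : ∀ e x, Phi (h e) x = (Phi e e).bind fun v => Phi v x := by
    intro e x
    have : Phi (h e) x = (c.curry e).eval x := by
      simp [Phi, hh]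
    rw [this, eval_curry, hc]
    simp
  have hhcomp : Computable h :=
    (Primrec.encode.comp
      (primrec₂_curry.comp (Primrec.const c) Primrec.id)).to_comp
  refine ⟨fun e => g (h e), hg.comp hhcomp, ?_⟩
  intro e hd hne
  set v := (Phi e e).get hd with hv
  have hsome : Phi e e = Part.some v := (Part.some_get hd).symm
  have hWeq : WSet (h e) = WSet v := by
    ext x
    simp [WSet, hkey, hsome]
  have hne' : g (h e) = v := hne
  exact hfpf (h e) (by rw [hne', ← hWeq])
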